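/- Interval-linearizability of write-snapshot executions (core of the correctness of the write-snapshot algorithm): Let E be a well-formed execution over n processes in which each process p_i invokes write_snapshot(i) at most once, and suppose that for each completed operation of a process p_i, returning a set set_i, there exists a position τ_i in E, strictly after the invocation of p_i and strictly before the response of p_i, such that set_i equals exactly the set of indices j whose invocation occurs before position τ_i in E. Then E is interval-linearizable with respect to the write-snapshot interval-sequential object. -/

import Mathlib

/-! ## One-shot executions, interval-sequential objects, interval-linearizability, tasks -/

/-- An event: an invocation of the (single) operation by a process with an input value,
or a response to a process with an output value. -/
inductive Ev (Proc In Out : Type) where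
  | inv (p : Proc) (x : In)
  | res (p : Proc) (y : Out)
deriving DecidableEq

namespace Ev

variable {Proc In Out : Type}

/-- The process issuing/receiving the event. -/
def proc : Ev Proc In Out → Proc
  | .inv p _ => p
  | .res p _ => p

/-- Is the event an invocation? -/
def isInv : Ev Proc In Out → Bool
  | .inv _ _ => true
  | _ => false

/-- Is the event a response? -/
def isRes : Ev Proc In Out → Bool
  | .res _ _ => true
  | _ => false

end Ev

variable {Proc In Out : Type} [DecidableEq Proc] [DecidableEq In] [DecidableEq Out]

/-- Projection of an execution (a finite sequence of events) onto a process. -/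
def projP (E : List (Ev Proc In Out)) (p : Proc) : List (Ev Proc In Out) :=
  E.filter (fun e => decide (e.proc = p))

/-- A well-formed one-shot execution: each process's subsequence is empty, a single
invocation, or an invocation followed by its matching response. -/
def OneShotWF (E : List (Ev Proc In Out)) : Prop :=
  ∀ p : Proc,
    projP E p = [] ∨ (∃ x, projP E p = [Ev.inv p x]) ∨
      ∃ x y, projP E p = [Ev.inv p x, Ev.res p y]

/-- `comp E`: the execution `E` with its pending invocations removed. -/
def comp (E : List (Ev Proc In Out)) : List (Ev Proc In Out) :=
  E.filter (fun e => e.isRes || E.any (fun e' => e'.isRes && decide (e'.proc = e.proc)))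

/-- `Ebar` extends `E` by appending zero or more matching responses to pending
invocations (well-formedness of `Ebar` forces the appended responses to match). -/
def Extension (E Ebar : List (Ev Proc In Out)) : Prop :=
  OneShotWF Ebar ∧ ∃ F, Ebar = E ++ F ∧ ∀ e ∈ F, e.isRes = true

/-- Real-time precedence between the (one-shot) operation calls of processes `p` and `q`
in an execution: the response of `p` occurs before the invocation of `q`. -/
def Prec (E : List (Ev Proc In Out)) (p q : Proc) : Prop :=
  ∃ (i j : ℕ) (y : Out) (x : In),
    i < j ∧ E[i]? = some (Ev.res p y) ∧ E[j]? = some (Ev.inv q x)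

/-- An invoking concurrency class: a nonempty finite set of invocations,
at most one per process. -/
def InvClass (C : Finset (Ev Proc In Out)) : Prop :=
  C.Nonempty ∧ (∀ e ∈ C, e.isInv = true) ∧
    ∀ e ∈ C, ∀ e' ∈ C, e.proc = e'.proc → e = e'

/-- A responding concurrency class: a nonempty finite set of responses,
at most one per process. -/
def ResClass (C : Finset (Ev Proc In Out)) : Prop :=
  C.Nonempty ∧ (∀ e ∈ C, e.isRes = true) ∧
    ∀ e ∈ C, ∀ e' ∈ C, e.proc = e'.proc → e = e'

/-- An interval-sequential execution `I₀,R₀,I₁,R₁,…,I_m,R_m`, represented as a flat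
list of concurrency classes: classes at even positions are invoking, classes at odd
positions are responding, and every response matches an invocation in an earlier
(or simultaneous-round) invoking class with no further invocation by the same
process in between. -/
def IsISExec (h : List (Finset (Ev Proc In Out))) : Prop :=
  h.length % 2 = 0 ∧
  (∀ k C, h[k]? = some C → if k % 2 = 0 then InvClass C else ResClass C) ∧
  (∀ i C r, h[i]? = some C → i % 2 = 1 → r ∈ C →
    ∃ j, j ≤ i ∧ j % 2 = 0 ∧
      (∃ D, h[j]? = some D ∧ ∃ e ∈ D, e.isInv = true ∧ e.proc = r.proc) ∧
      ∀ j' D', j < j' → j' ≤ i → j' % 2 = 0 → h[j']? = some D' →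
        ∀ e ∈ D', e.isInv = true → e.proc ≠ r.proc)

/-- An interval-sequential object: a Mealy automaton whose transitions, from a state
and a (nonempty) invoking concurrency class, produce a (nonempty) responding
concurrency class and a next state; the response uniquely determines the new state. -/
structure ISObject (Proc In Out : Type) where
  State : Type
  init : Set State
  δ : State → Finset (Ev Proc In Out) → Set (Finset (Ev Proc In Out) × State)
  valid : ∀ q I R q', (R, q') ∈ δ q I → InvClass I ∧ ResClass R
  det : ∀ q I R q1 q2, (R, q1) ∈ δ q I → (R, q2) ∈ δ q I → q1 = q2

/-- The interval-sequential specification of an object: all interval-sequential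
executions generated from an initial state by the transition relation. -/
def ISS (O : ISObject Proc In Out) : Set (List (Finset (Ev Proc In Out))) :=
  { h | IsISExec h ∧ ∃ q : ℕ → O.State, q 0 ∈ O.init ∧
      ∀ i I R, h[2*i]? = some I → h[2*i+1]? = some R →
        (R, q (i+1)) ∈ O.δ (q i) I }

/-- Projection of an interval-sequential execution onto a process `p`
(each class contains at most one event of `p`). -/
noncomputable def projPIS (h : List (Finset (Ev Proc In Out))) (p : Proc) : List (Ev Proc In Out) :=
  h.flatMap (fun C => (C.filter (fun e => e.proc = p)).toList)

/-- The interval-sequential execution `h` respects the real-time order of `Ecomp`: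
whenever the operation of `p` precedes that of `q`, every class containing an event
of `p` comes before every class containing an event of `q`. -/
def Respects (Ecomp : List (Ev Proc In Out)) (h : List (Finset (Ev Proc In Out))) : Prop :=
  ∀ p q, Prec Ecomp p q →
    ∀ (k l : ℕ) (C D : Finset (Ev Proc In Out)), h[k]? = some C → h[l]? = some D →
      (∃ e ∈ C, e.proc = p) → (∃ e ∈ D, e.proc = q) → k < l

/-- `E` is interval-linearizable with respect to the object `O`. -/
def IntervalLin (O : ISObject Proc In Out) (E : List (Ev Proc In Out)) : Prop :=
  ∃ Ebar h, Extension E Ebar ∧ h ∈ ISS O ∧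
    (∀ p, projP (comp Ebar) p = projPIS h p) ∧
    Respects (comp Ebar) h

/-- A task `(I, O, Δ)`: pure chromatic `(n-1)`-dimensional input and output complexes
together with a carrier map `Δ`. -/
structure DTask (Proc In Out : Type) [DecidableEq Proc] [DecidableEq In]
    [DecidableEq Out] [Fintype Proc] where
  I : Set (Finset (Proc × In))
  O : Set (Finset (Proc × Out))
  Δ : Finset (Proc × In) → Set (Finset (Proc × Out))
  I_nonempty : I.Nonempty
  I_down : ∀ σ ∈ I, ∀ σ' ⊆ σ, σ' ∈ I
  O_down : ∀ τ ∈ O, ∀ τ' ⊆ τ, τ' ∈ O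
  I_chromatic : ∀ σ ∈ I, ∀ v ∈ σ, ∀ w ∈ σ, (v : Proc × In).1 = w.1 → v = w
  O_chromatic : ∀ τ ∈ O, ∀ v ∈ τ, ∀ w ∈ τ, (v : Proc × Out).1 = w.1 → v = w
  I_pure : ∀ σ ∈ I, ∃ σ' ∈ I, σ ⊆ σ' ∧ σ'.card = Fintype.card Proc
  O_pure : ∀ τ ∈ O, ∃ τ' ∈ O, τ ⊆ τ' ∧ τ'.card = Fintype.card Proc
  Δ_sub : ∀ σ ∈ I, Δ σ ⊆ O
  Δ_nonempty : ∀ σ ∈ I, (Δ σ).Nonempty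
  Δ_down : ∀ σ ∈ I, ∀ τ ∈ Δ σ, ∀ τ' ⊆ τ, τ' ∈ Δ σ
  Δ_pure : ∀ σ ∈ I, ∀ τ ∈ Δ σ, ∃ τ' ∈ Δ σ, τ ⊆ τ' ∧ τ'.card = σ.card
  Δ_ids : ∀ σ ∈ I, ∀ τ ∈ Δ σ, τ.card = σ.card →
    τ.image Prod.fst = σ.image Prod.fst
  Δ_mono : ∀ σ ∈ I, ∀ σ' ⊆ σ, Δ σ' ⊆ Δ σ

/-- `σ_E`: the input simplex of all invocations of an execution. -/
def inputSimplex (E : List (Ev Proc In Out)) : Finset (Proc × In) :=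
  (E.filterMap (fun e => match e with | .inv p x => some (p, x) | _ => none)).toFinset

/-- `τ_E`: the output simplex of all responses of an execution. -/
def outputSimplex (E : List (Ev Proc In Out)) : Finset (Proc × Out) :=
  (E.filterMap (fun e => match e with | .res p y => some (p, y) | _ => none)).toFinset

/-- `E` satisfies the task `T`: for every prefix `E'` of `E`, `τ_{E'} ∈ Δ(σ_{E'})`. -/
def Satisfies [Fintype Proc] (T : DTask Proc In Out) (E : List (Ev Proc In Out)) : Prop :=
  ∀ k, outputSimplex (E.take k) ∈ T.Δ (inputSimplex (E.take k))

/-! ## Statement: the write-snapshot algorithm is interval-linearizable -/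

/-- The write-snapshot interval-sequential object for `n` processes (process `i`
proposes its index `i`, encoded with trivial input `()`): states are pairs
`(vals, pend)`; a transition on an invoking class `I` may return a responding class
`R` whose responses are to pending or currently invoking processes and all return
`vals ∪ ids(I)`, moving to the state `(vals ∪ ids(I), (pend ∪ ids(I)) \ ids(R))`. -/
def wsObject (n : ℕ) : ISObject (Fin n) Unit (Finset (Fin n)) where
  State := Finset (Fin n) × Finset (Fin n)
  init := {(∅, ∅)}
  δ := fun q I =>
    { Rq | InvClass I ∧ ResClass Rq.1 ∧
        (∀ e ∈ Rq.1, Ev.proc e ∈ q.2 ∨ ∃ e' ∈ I, Ev.proc e' = Ev.proc e) ∧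
        (∀ (p : Fin n) (s : Finset (Fin n)), Ev.res p s ∈ Rq.1 →
          s = q.1 ∪ I.image Ev.proc) ∧
        Rq.2.1 = q.1 ∪ I.image Ev.proc ∧
        Rq.2.2 = (q.2 ∪ I.image Ev.proc) \ Rq.1.image Ev.proc }
  valid := by
    rintro q I R q' h
    exact ⟨h.1, h.2.1⟩
  det := by
    rintro q I R q1 q2 h1 h2
    simp only [Set.mem_setOf_eq] at h1 h2
    obtain ⟨-, -, -, -, a1, b1⟩ := h1
    obtain ⟨-, -, -, -, a2, b2⟩ := h2
    cases q1; cases q2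
    simp only [Prod.mk.injEq]
    exact ⟨a1.trans a2.symm, b1.trans b2.symm⟩


/-! ## Auxiliary development for the proof -/

namespace WS
open Classical

variable {n : ℕ}

abbrev Evt (n : ℕ) := Ev (Fin n) Unit (Finset (Fin n))

/-- indices invoked strictly before position `t`. -/
def prefInv (E : List (Evt n)) (t : ℕ) : Finset (Fin n) :=
  ((E.take t).filterMap (fun e => match e with | .inv j _ => some j | _ => none)).toFinset

lemma mem_prefInv {E : List (Evt n)} {t : ℕ} {j : Fin n} :
    j ∈ prefInv E t ↔ ∃ c < t, E[c]? = some (Ev.inv j ()) := by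
  simp only [prefInv, List.mem_toFinset, List.mem_filterMap]
  constructor
  · rintro ⟨e, he, hmatch⟩
    obtain ⟨c, hc⟩ := List.mem_iff_getElem?.1 he
    cases e with
    | inv p x =>
      simp only [Option.some_inj] at hmatch
      subst hmatch
      refine ⟨c, ?_, ?_⟩
      · by_contra hct
        push_neg at hct
        rw [List.getElem?_take] at hc
        simp [Nat.not_lt.2 hct] at hc
      · rw [List.getElem?_take] at hc
        split at hc
        · cases x; exact hc
        · exact absurd hc (by simp)
    | res p y => simp at hmatch
  · rintro ⟨c, hct, hc⟩
    refine ⟨Ev.inv j (), ?_, rfl⟩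
    exact List.mem_iff_getElem?.2 ⟨c, by rw [List.getElem?_take]; simp [hct, hc]⟩

lemma prefInv_mono {E : List (Evt n)} {t t' : ℕ} (h : t ≤ t') :
    prefInv E t ⊆ prefInv E t' := by
  intro j hj
  rw [mem_prefInv] at hj ⊢
  obtain ⟨c, hc, hcc⟩ := hj
  exact ⟨c, lt_of_lt_of_le hc h, hcc⟩

lemma inv_mem_of_mem_prefInv {E : List (Evt n)} {t : ℕ} {j : Fin n}
    (h : j ∈ prefInv E t) : Ev.inv j () ∈ E := by
  rw [mem_prefInv] at h
  obtain ⟨c, _, hc⟩ := h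
  exact List.mem_of_getElem? hc

def CompletedP (E : List (Evt n)) (p : Fin n) : Prop := ∃ s, Ev.res p s ∈ E

noncomputable def sp (E : List (Evt n)) (p : Fin n) : Finset (Fin n) :=
  if h : CompletedP E p then h.choose else ∅

lemma res_sp_mem {E : List (Evt n)} {p : Fin n} (h : CompletedP E p) :
    Ev.res p (sp E p) ∈ E := by
  rw [sp, dif_pos h]; exact h.choose_spec

def TimeProp (E : List (Evt n)) (p : Fin n) (t : ℕ) : Prop :=
  (∃ a < t, E[a]? = some (Ev.inv p ())) ∧
  (∃ b, t < b ∧ E[b]? = some (Ev.res p (sp E p))) ∧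
  (∀ j, j ∈ sp E p ↔ ∃ c < t, E[c]? = some (Ev.inv j ()))

noncomputable def time (E : List (Evt n)) (p : Fin n) : ℕ :=
  if h : ∃ t, TimeProp E p t then h.choose else 0

/-- the snapshot hypothesis of the theorem -/
def Hsnap (E : List (Evt n)) : Prop :=
  ∀ (i : Fin n) (s : Finset (Fin n)), Ev.res i s ∈ E →
      ∃ t : ℕ,
        (∃ a : ℕ, a < t ∧ E[a]? = some (Ev.inv i ())) ∧
        (∃ b : ℕ, t < b ∧ E[b]? = some (Ev.res i s)) ∧
        (∀ j : Fin n, j ∈ s ↔ ∃ c : ℕ, c < t ∧ E[c]? = some (Ev.inv j ()))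

lemma timeProp_holds {E : List (Evt n)} (hs : Hsnap E) {p : Fin n} (h : CompletedP E p) :
    TimeProp E p (time E p) := by
  obtain ⟨t, h1, h2, h3⟩ := hs p (sp E p) (res_sp_mem h)
  have hex : ∃ t, TimeProp E p t := ⟨t, h1, h2, h3⟩
  rw [time, dif_pos hex]
  exact hex.choose_spec

lemma sp_eq_prefInv {E : List (Evt n)} (hs : Hsnap E) {p : Fin n} (h : CompletedP E p) :
    sp E p = prefInv E (time E p) := by
  ext j
  rw [mem_prefInv, (timeProp_holds hs h).2.2 j]

lemma self_mem_sp {E : List (Evt n)} (hs : Hsnap E) {p : Fin n} (h : CompletedP E p) :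
    p ∈ sp E p := by
  rw [(timeProp_holds hs h).2.2 p]
  obtain ⟨a, ha, ha2⟩ := (timeProp_holds hs h).1
  exact ⟨a, ha, ha2⟩

noncomputable def SS (E : List (Evt n)) : Finset (Finset (Fin n)) :=
  (Finset.univ.filter (fun p => CompletedP E p)).image (fun p => prefInv E (time E p))

lemma mem_SS {E : List (Evt n)} {s : Finset (Fin n)} :
    s ∈ SS E ↔ ∃ p, CompletedP E p ∧ prefInv E (time E p) = s := by
  simp [SS]

noncomputable def minTimes (E : List (Evt n)) : Finset ℕ :=
  (Finset.range (E.length + 1)).filter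
    (fun t => prefInv E t ∈ SS E ∧ ∀ t' < t, prefInv E t' ≠ prefInv E t)

noncomputable def L (E : List (Evt n)) : List (Finset (Fin n)) :=
  ((minTimes E).sort (· ≤ ·)).map (prefInv E)

noncomputable def m (E : List (Evt n)) : ℕ := (L E).length

noncomputable def sAt (E : List (Evt n)) (k : ℕ) : Finset (Fin n) := (L E).getD k ∅

lemma sAt_eq {E : List (Evt n)} {k : ℕ} (hk : k < m E) : (L E)[k]? = some (sAt E k) := by
  rw [sAt, List.getD_eq_getElem?_getD, List.getElem?_eq_getElem hk]
  rfl

lemma sAt_mem_SS {E : List (Evt n)} {k : ℕ} (hk : k < m E) : sAt E k ∈ SS E := by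
  have h1 : sAt E k ∈ L E := List.mem_of_getElem? (sAt_eq hk)
  rw [L, List.mem_map] at h1
  obtain ⟨t, ht, hts⟩ := h1
  rw [Finset.mem_sort] at ht
  rw [minTimes, Finset.mem_filter] at ht
  rw [← hts]; exact ht.2.1

lemma sAt_get {E : List (Evt n)} {k : ℕ} (hk : k < ((minTimes E).sort (· ≤ ·)).length) :
    sAt E k = prefInv E (((minTimes E).sort (· ≤ ·))[k]) := by
  have hk' : k < m E := by rw [m, L, List.length_map]; exact hk
  have h1 := sAt_eq hk'
  rw [L, List.getElem?_map, List.getElem?_eq_getElem hk] at h1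
  simp only [Option.map_some, Option.some_inj] at h1
  exact h1.symm

lemma sAt_strict {E : List (Evt n)} {k k' : ℕ} (hkk : k < k') (hk' : k' < m E) :
    sAt E k ⊂ sAt E k' := by
  have hk : k < m E := lt_trans hkk hk'
  have hlen : m E = ((minTimes E).sort (· ≤ ·)).length := by
    rw [m, L, List.length_map]
  have hk2 : k < ((minTimes E).sort (· ≤ ·)).length := by omega
  have hk'2 : k' < ((minTimes E).sort (· ≤ ·)).length := by omega
  set tl := (minTimes E).sort (· ≤ ·) with htl
  have hle : tl[k] ≤ tl[k'] := by
    have := Finset.pairwise_sort (r := (· ≤ ·)) (s := minTimes E)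
    rw [List.pairwise_iff_getElem] at this
    exact this k k' hk2 hk'2 hkk
  have hne : tl[k] ≠ tl[k'] := by
    have := Finset.sort_nodup (r := (· ≤ ·)) (s := minTimes E)
    rw [List.Nodup, List.pairwise_iff_getElem] at this
    exact this k k' hk2 hk'2 hkk
  have hlt : tl[k] < tl[k'] := lt_of_le_of_ne hle hne
  have hmem : tl[k'] ∈ minTimes E := by
    rw [← Finset.mem_sort (· ≤ ·)]
    exact List.getElem_mem _
  rw [minTimes, Finset.mem_filter] at hmem
  have hnepre : prefInv E tl[k] ≠ prefInv E tl[k'] := hmem.2.2 tl[k] hlt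
  rw [sAt_get hk2, sAt_get hk'2]
  exact lt_of_le_of_ne (prefInv_mono (le_of_lt hlt)) hnepre

lemma sAt_mono {E : List (Evt n)} {k k' : ℕ} (hkk : k ≤ k') (hk' : k' < m E) :
    sAt E k ⊆ sAt E k' := by
  rcases eq_or_lt_of_le hkk with rfl | h
  · exact subset_rfl
  · exact (sAt_strict h hk').subset

lemma sAt_inj {E : List (Evt n)} {k k' : ℕ} (hk : k < m E) (hk' : k' < m E)
    (h : sAt E k = sAt E k') : k = k' := by
  rcases lt_trichotomy k k' with hlt | heq | hgt
  · exact absurd h (sAt_strict hlt hk').ne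
  · exact heq
  · exact absurd h.symm (sAt_strict hgt hk).ne

lemma SS_surj {E : List (Evt n)} (hs : Hsnap E) {s : Finset (Fin n)} (h : s ∈ SS E) :
    ∃ k < m E, sAt E k = s := by
  obtain ⟨p, hp, hps⟩ := mem_SS.1 h
  have hex : ∃ t, prefInv E t = s := ⟨time E p, hps⟩
  set t0 := Nat.find hex with ht0
  have ht0s : prefInv E t0 = s := Nat.find_spec hex
  have htle : t0 ≤ E.length := by
    have h2 := (timeProp_holds hs hp).2.1
    obtain ⟨b, hb1, hb2⟩ := h2
    have hbl : b < E.length := by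
      by_contra hbl
      push_neg at hbl
      rw [List.getElem?_eq_none hbl] at hb2
      exact nomatch hb2
    have : t0 ≤ time E p := Nat.find_le hps
    omega
  have hmem : t0 ∈ minTimes E := by
    rw [minTimes, Finset.mem_filter, Finset.mem_range]
    refine ⟨by omega, by rw [ht0s]; exact h, ?_⟩
    intro t' ht' hcon
    exact Nat.find_min hex ht' (hcon.trans ht0s)
  have : prefInv E t0 ∈ L E := by
    rw [L, List.mem_map]
    exact ⟨t0, (Finset.mem_sort _).2 hmem, rfl⟩
  obtain ⟨k, hk⟩ := List.mem_iff_getElem?.1 this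
  have hkm : k < m E := by
    by_contra hkm
    push_neg at hkm
    rw [List.getElem?_eq_none hkm] at hk
    exact nomatch hk
  refine ⟨k, hkm, ?_⟩
  have := sAt_eq hkm
  rw [this] at hk
  rw [← ht0s]
  exact Option.some_inj.1 hk

noncomputable def pSet (E : List (Evt n)) : ℕ → Finset (Fin n)
  | 0 => ∅
  | (k+1) => sAt E k

lemma pSet_subset {E : List (Evt n)} {k : ℕ} (hk : k < m E) : pSet E k ⊆ sAt E k := by
  cases k with
  | zero => simp [pSet]
  | succ j => exact (sAt_strict (Nat.lt_succ_self j) hk).subset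

noncomputable def Iprocs (E : List (Evt n)) (k : ℕ) : Finset (Fin n) :=
  sAt E k \ pSet E k

noncomputable def Iclass (E : List (Evt n)) (k : ℕ) : Finset (Evt n) :=
  (Iprocs E k).image (fun j => Ev.inv j ())

noncomputable def responders (E : List (Evt n)) (k : ℕ) : Finset (Fin n) :=
  (sAt E k).filter (fun p =>
    (CompletedP E p ∧ prefInv E (time E p) = sAt E k) ∨ (¬ CompletedP E p ∧ p ∉ pSet E k))

noncomputable def Rclass (E : List (Evt n)) (k : ℕ) : Finset (Evt n) :=
  (responders E k).image (fun p => Ev.res p (sAt E k))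

noncomputable def hseq (E : List (Evt n)) : List (Finset (Evt n)) :=
  (List.range (2 * m E)).map (fun i => if i % 2 = 0 then Iclass E (i/2) else Rclass E (i/2))

noncomputable def qst (E : List (Evt n)) : ℕ → Finset (Fin n) × Finset (Fin n)
  | 0 => (∅, ∅)
  | (k+1) => ((qst E k).1 ∪ (Iclass E k).image Ev.proc,
      ((qst E k).2 ∪ (Iclass E k).image Ev.proc) \ (Rclass E k).image Ev.proc)

noncomputable def invRound (E : List (Evt n)) (p : Fin n) : ℕ :=
  (L E).findIdx (fun s => p ∈ s)

noncomputable def resRound (E : List (Evt n)) (p : Fin n) : ℕ :=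
  (L E).findIdx (fun s => s = prefInv E (time E p))

lemma Iprocs_image_proc {E : List (Evt n)} {k : ℕ} :
    (Iclass E k).image Ev.proc = Iprocs E k := by
  rw [Iclass, Finset.image_image]
  ext x; simp [Ev.proc]

lemma responders_image_proc {E : List (Evt n)} {k : ℕ} :
    (Rclass E k).image Ev.proc = responders E k := by
  rw [Rclass, Finset.image_image]
  ext x; simp [Ev.proc]

lemma findIdx_le_of_pred {α} {p : α → Bool} {xs : List α} {k : ℕ} (hk : k < xs.length)
    (h : p xs[k] = true) : xs.findIdx p ≤ k := by
  by_contra hc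
  push_neg at hc
  simp [List.not_of_lt_findIdx hc] at h

lemma sAt_getElem {E : List (Evt n)} {k : ℕ} (hk : k < (L E).length) :
    (L E)[k] = sAt E k := by
  have h := sAt_eq (show k < m E from hk)
  rw [List.getElem?_eq_getElem hk] at h
  exact Option.some_inj.1 h

lemma invRound_le {E : List (Evt n)} {p : Fin n} {k : ℕ} (hk : k < m E)
    (h : p ∈ sAt E k) : invRound E p ≤ k := by
  apply findIdx_le_of_pred (show k < (L E).length from hk)
  rw [sAt_getElem (show k < (L E).length from hk)]
  simpa using h

lemma invRound_lt {E : List (Evt n)} {p : Fin n} {k : ℕ} (hk : k < m E)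
    (h : p ∈ sAt E k) : invRound E p < m E := lt_of_le_of_lt (invRound_le hk h) hk

lemma mem_sAt_invRound {E : List (Evt n)} {p : Fin n} (h : invRound E p < m E) :
    p ∈ sAt E (invRound E p) := by
  simp only [invRound] at h ⊢
  have hb : (L E).findIdx (fun s => p ∈ s) < (L E).length := h
  have h2 := List.findIdx_getElem (p := fun s => p ∈ s) (xs := L E) (w := hb)
  rw [sAt_getElem hb] at h2
  simpa using h2

lemma not_mem_sAt_of_lt_invRound {E : List (Evt n)} {p : Fin n} {k : ℕ}
    (h : k < invRound E p) (hk : k < m E) : p ∉ sAt E k := by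
  simp only [invRound] at h
  have h2 := List.not_of_lt_findIdx (p := fun s => p ∈ s) (xs := L E) h
  rw [sAt_getElem (show k < (L E).length from hk)] at h2
  simpa using h2

lemma mem_Iprocs_iff {E : List (Evt n)} {p : Fin n} {k : ℕ} (hk : k < m E) :
    p ∈ Iprocs E k ↔ p ∈ sAt E k ∧ invRound E p = k := by
  rw [Iprocs, Finset.mem_sdiff]
  constructor
  · rintro ⟨h1, h2⟩
    refine ⟨h1, ?_⟩
    have hle := invRound_le hk h1
    rcases eq_or_lt_of_le hle with heq | hlt
    · exact heq
    · exfalso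
      cases k with
      | zero => omega
      | succ j =>
        apply h2
        rw [pSet]
        have hjm : j < m E := by omega
        exact sAt_mono (by omega) hjm (mem_sAt_invRound (by omega))
  · rintro ⟨h1, h2⟩
    refine ⟨h1, ?_⟩
    cases k with
    | zero => simp [pSet]
    | succ j =>
      rw [pSet]
      exact not_mem_sAt_of_lt_invRound (by omega) (by omega)

lemma resRound_spec {E : List (Evt n)} (hs : Hsnap E) {p : Fin n} (hp : CompletedP E p) :
    resRound E p < m E ∧ sAt E (resRound E p) = sp E p := by
  have hsp : sp E p ∈ SS E := by
    rw [sp_eq_prefInv hs hp]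
    exact mem_SS.2 ⟨p, hp, rfl⟩
  obtain ⟨k, hk, hks⟩ := SS_surj hs hsp
  have hfound : resRound E p ≤ k := by
    apply findIdx_le_of_pred (show k < (L E).length from hk)
    rw [sAt_getElem (show k < (L E).length from hk)]
    simp [hks, sp_eq_prefInv hs hp]
  have hlt : resRound E p < m E := lt_of_le_of_lt hfound hk
  refine ⟨hlt, ?_⟩
  have hb : (L E).findIdx (fun s => s = prefInv E (time E p)) < (L E).length := hlt
  have h2 := List.findIdx_getElem (p := fun s => s = prefInv E (time E p)) (xs := L E) (w := hb)
  rw [sAt_getElem hb] at h2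
  simp only [decide_eq_true_eq] at h2
  show sAt E ((L E).findIdx (fun s => s = prefInv E (time E p))) = sp E p
  rw [h2, ← sp_eq_prefInv hs hp]

lemma resRound_unique {E : List (Evt n)} (hs : Hsnap E) {p : Fin n} (hp : CompletedP E p)
    {k : ℕ} (hk : k < m E) (h : sAt E k = sp E p) : k = resRound E p := by
  exact sAt_inj hk (resRound_spec hs hp).1 (h.trans (resRound_spec hs hp).2.symm)

lemma invRound_le_resRound {E : List (Evt n)} (hs : Hsnap E) {p : Fin n}
    (hp : CompletedP E p) : invRound E p ≤ resRound E p := by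
  apply invRound_le (resRound_spec hs hp).1
  rw [(resRound_spec hs hp).2]
  exact self_mem_sp hs hp

lemma mem_responders_iff {E : List (Evt n)} (hs : Hsnap E) {p : Fin n} {k : ℕ} (hk : k < m E) :
    p ∈ responders E k ↔ p ∈ sAt E k ∧
      ((CompletedP E p ∧ resRound E p = k) ∨ (¬ CompletedP E p ∧ invRound E p = k)) := by
  rw [responders, Finset.mem_filter]
  constructor
  · rintro ⟨h1, h2⟩
    refine ⟨h1, ?_⟩
    rcases h2 with ⟨hc, heq⟩ | ⟨hnc, hnp⟩
    · left
      refine ⟨hc, ?_⟩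
      exact (resRound_unique hs hc hk (by rw [heq.symm, ← sp_eq_prefInv hs hc])).symm
    · right
      refine ⟨hnc, ?_⟩
      exact ((mem_Iprocs_iff hk).1 (Finset.mem_sdiff.2 ⟨h1, hnp⟩)).2
  · rintro ⟨h1, h2⟩
    refine ⟨h1, ?_⟩
    rcases h2 with ⟨hc, heq⟩ | ⟨hnc, heq⟩
    · left
      refine ⟨hc, ?_⟩
      rw [← sp_eq_prefInv hs hc, ← heq, (resRound_spec hs hc).2]
    · right
      refine ⟨hnc, ?_⟩
      have := (mem_Iprocs_iff hk).2 ⟨h1, heq⟩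
      rw [Iprocs, Finset.mem_sdiff] at this
      exact this.2

lemma exists_completed_sAt {E : List (Evt n)} (hs : Hsnap E) {k : ℕ} (hk : k < m E) :
    ∃ p, CompletedP E p ∧ prefInv E (time E p) = sAt E k ∧ p ∈ sAt E k := by
  obtain ⟨p, hp, hps⟩ := mem_SS.1 (sAt_mem_SS hk)
  refine ⟨p, hp, hps, ?_⟩
  rw [← hps, ← sp_eq_prefInv hs hp]
  exact self_mem_sp hs hp

lemma Iprocs_nonempty {E : List (Evt n)} (hs : Hsnap E) {k : ℕ} (hk : k < m E) :
    (Iprocs E k).Nonempty := by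
  cases k with
  | zero =>
    obtain ⟨p, hp, hps, hmem⟩ := exists_completed_sAt hs hk
    exact ⟨p, Finset.mem_sdiff.2 ⟨hmem, by simp [pSet]⟩⟩
  | succ j =>
    obtain ⟨p, hp1, hp2⟩ := Finset.exists_of_ssubset (sAt_strict (Nat.lt_succ_self j) hk)
    exact ⟨p, Finset.mem_sdiff.2 ⟨hp1, by rw [pSet]; exact hp2⟩⟩

lemma responders_nonempty {E : List (Evt n)} (hs : Hsnap E) {k : ℕ} (hk : k < m E) :
    (responders E k).Nonempty := by
  obtain ⟨p, hp, hps, hmem⟩ := exists_completed_sAt hs hk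
  exact ⟨p, Finset.mem_filter.2 ⟨hmem, Or.inl ⟨hp, hps⟩⟩⟩

lemma InvClass_Iclass {E : List (Evt n)} (hs : Hsnap E) {k : ℕ} (hk : k < m E) :
    InvClass (Iclass E k) := by
  refine ⟨Finset.Nonempty.image (Iprocs_nonempty hs hk) _, ?_, ?_⟩
  · intro e he
    rw [Iclass, Finset.mem_image] at he
    obtain ⟨j, _, rfl⟩ := he
    rfl
  · intro e he e' he' hpp
    rw [Iclass, Finset.mem_image] at he he'
    obtain ⟨j, _, rfl⟩ := he
    obtain ⟨j', _, rfl⟩ := he'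
    simp only [Ev.proc] at hpp
    rw [hpp]

lemma ResClass_Rclass {E : List (Evt n)} (hs : Hsnap E) {k : ℕ} (hk : k < m E) :
    ResClass (Rclass E k) := by
  refine ⟨Finset.Nonempty.image (responders_nonempty hs hk) _, ?_, ?_⟩
  · intro e he
    rw [Rclass, Finset.mem_image] at he
    obtain ⟨j, _, rfl⟩ := he
    rfl
  · intro e he e' he' hpp
    rw [Rclass, Finset.mem_image] at he he'
    obtain ⟨j, _, rfl⟩ := he
    obtain ⟨j', _, rfl⟩ := he'
    simp only [Ev.proc] at hpp
    rw [hpp]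

lemma qst_fst {E : List (Evt n)} : ∀ {k : ℕ}, k ≤ m E → (qst E k).1 = pSet E k := by
  intro k
  induction k with
  | zero => intro _; rfl
  | succ j ih =>
    intro hj
    have hjm : j < m E := by omega
    show (qst E j).1 ∪ (Iclass E j).image Ev.proc = pSet E (j+1)
    rw [ih (le_of_lt hjm), Iprocs_image_proc, Iprocs]
    show pSet E j ∪ (sAt E j \ pSet E j) = sAt E j
    exact Finset.union_sdiff_of_subset (pSet_subset hjm)

lemma mem_qst_snd {E : List (Evt n)} {p : Fin n} :
    ∀ {i k : ℕ}, k < i → p ∈ Iprocs E k →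
      (∀ k', k ≤ k' → k' < i → p ∉ responders E k') → p ∈ (qst E i).2 := by
  intro i
  induction i with
  | zero => intro k h; omega
  | succ j ih =>
    intro k hk hI hR
    show p ∈ ((qst E j).2 ∪ (Iclass E j).image Ev.proc) \ (Rclass E j).image Ev.proc
    rw [Finset.mem_sdiff, responders_image_proc, Iprocs_image_proc]
    refine ⟨?_, hR j (by omega) (by omega)⟩
    rcases Nat.lt_or_ge k j with hkj | hkj
    · exact Finset.mem_union_left _ (ih hkj hI (fun k' h1 h2 => hR k' h1 (by omega)))
    · have : k = j := by omega
      subst this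
      exact Finset.mem_union_right _ hI

lemma hseq_length {E : List (Evt n)} : (hseq E).length = 2 * m E := by
  rw [hseq, List.length_map, List.length_range]

lemma hseq_getElem? {E : List (Evt n)} {k : ℕ} (hk : k < 2 * m E) :
    (hseq E)[k]? = some (if k % 2 = 0 then Iclass E (k/2) else Rclass E (k/2)) := by
  rw [hseq, List.getElem?_map, List.getElem?_range hk]
  rfl

lemma hseq_getElem?_eq_some {E : List (Evt n)} {k : ℕ} {C : Finset (Evt n)}
    (h : (hseq E)[k]? = some C) :
    k < 2 * m E ∧ C = (if k % 2 = 0 then Iclass E (k/2) else Rclass E (k/2)) := by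
  have hk : k < 2 * m E := by
    by_contra hc
    push_neg at hc
    rw [List.getElem?_eq_none (by rw [hseq_length]; exact hc)] at h
    exact nomatch h
  rw [hseq_getElem? hk] at h
  exact ⟨hk, (Option.some_inj.1 h).symm⟩

lemma mem_Iclass_iff {E : List (Evt n)} {k : ℕ} {e : Evt n} :
    e ∈ Iclass E k ↔ ∃ j ∈ Iprocs E k, e = Ev.inv j () := by
  rw [Iclass, Finset.mem_image]
  constructor
  · rintro ⟨j, hj, rfl⟩; exact ⟨j, hj, rfl⟩
  · rintro ⟨j, hj, rfl⟩; exact ⟨j, hj, rfl⟩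

lemma mem_Rclass_iff {E : List (Evt n)} {k : ℕ} {e : Evt n} :
    e ∈ Rclass E k ↔ ∃ p ∈ responders E k, e = Ev.res p (sAt E k) := by
  rw [Rclass, Finset.mem_image]
  constructor
  · rintro ⟨j, hj, rfl⟩; exact ⟨j, hj, rfl⟩
  · rintro ⟨j, hj, rfl⟩; exact ⟨j, hj, rfl⟩

lemma hseq_mem_ISS {E : List (Evt n)} (hs : Hsnap E) : hseq E ∈ ISS (wsObject n) := by
  constructor
  · refine ⟨by rw [hseq_length]; omega, ?_, ?_⟩
    · intro k C hC
      obtain ⟨hk, rfl⟩ := hseq_getElem?_eq_some hC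
      have hkm : k / 2 < m E := by omega
      by_cases hk2 : k % 2 = 0
      · simp only [hk2, if_pos]
        simpa [hk2] using InvClass_Iclass hs hkm
      · simp only [hk2]
        simpa [hk2] using ResClass_Rclass hs hkm
    · intro i C r hC hi hr
      obtain ⟨hilt, rfl⟩ := hseq_getElem?_eq_some hC
      rw [if_neg (by omega)] at hr
      obtain ⟨p, hp, rfl⟩ := mem_Rclass_iff.1 hr
      set k := i / 2 with hkdef
      have hkm : k < m E := by omega
      have hpsAt : p ∈ sAt E k := Finset.mem_filter.1 hp |>.1
      have hinvle : invRound E p ≤ k := invRound_le hkm hpsAt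
      have hinvlt : invRound E p < m E := lt_of_le_of_lt hinvle hkm
      refine ⟨2 * invRound E p, by omega, by omega, ?_, ?_⟩
      · refine ⟨Iclass E (invRound E p), ?_, Ev.inv p (), ?_, rfl, rfl⟩
        · rw [hseq_getElem? (by omega)]
          simp [Nat.mul_div_cancel_left]
        · exact mem_Iclass_iff.2 ⟨p, (mem_Iprocs_iff hinvlt).2
            ⟨mem_sAt_invRound hinvlt, rfl⟩, rfl⟩
      · intro j' D' hj1 hj2 hj3 hD' e he hei hep
        obtain ⟨hj'lt, rfl⟩ := hseq_getElem?_eq_some hD'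
        rw [if_pos hj3] at he
        obtain ⟨j0, hj0, rfl⟩ := mem_Iclass_iff.1 he
        have : j0 = p := hep
        subst this
        have := ((mem_Iprocs_iff (show j' / 2 < m E by omega)).1 hj0).2
        omega
  · refine ⟨qst E, by simp [wsObject, qst]; exact Set.mem_singleton _, ?_⟩
    intro i I R hI hR
    obtain ⟨hilt, rfl⟩ := hseq_getElem?_eq_some hI
    obtain ⟨_, rfl⟩ := hseq_getElem?_eq_some hR
    rw [if_pos (by omega), if_neg (by omega)]
    have h2i : 2 * i / 2 = i := by omega
    have h2i1 : (2 * i + 1) / 2 = i := by omega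
    rw [h2i, h2i1]
    have him : i < m E := by omega
    refine ⟨InvClass_Iclass hs him, ResClass_Rclass hs him, ?_, ?_, rfl, rfl⟩
    · intro e he
      obtain ⟨p, hp, rfl⟩ := mem_Rclass_iff.1 he
      show p ∈ (qst E i).2 ∨ _
      obtain ⟨hpsAt, hcase⟩ := (mem_responders_iff hs him).1 hp
      by_cases hir : invRound E p = i
      · right
        refine ⟨Ev.inv p (), mem_Iclass_iff.2 ⟨p, (mem_Iprocs_iff him).2 ⟨hpsAt, hir⟩, rfl⟩, rfl⟩
      · left
        rcases hcase with ⟨hc, hrr⟩ | ⟨hnc, hinv⟩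
        · have hle : invRound E p ≤ i := by
            rw [← hrr]; exact invRound_le_resRound hs hc
          have hlt : invRound E p < i := lt_of_le_of_ne hle hir
          apply mem_qst_snd hlt
          · exact (mem_Iprocs_iff (by omega)).2 ⟨mem_sAt_invRound (by omega), rfl⟩
          · intro k' h1 h2 hcon
            have hk'm : k' < m E := by omega
            rcases ((mem_responders_iff hs hk'm).1 hcon).2 with ⟨_, hr2⟩ | ⟨hn2, _⟩
            · omega
            · exact hn2 hc
        · exact absurd hinv hir
    · intro p s hmem
      rw [Iprocs_image_proc]
      obtain ⟨p', hp', heq⟩ := mem_Rclass_iff.1 hmem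
      have : p = p' ∧ s = sAt E i := by
        cases heq; exact ⟨rfl, rfl⟩
      obtain ⟨rfl, rfl⟩ := this
      rw [qst_fst (le_of_lt him)]
      exact (Finset.union_sdiff_of_subset (pSet_subset him)).symm

lemma flat_concat {α : Type*} (f : ℕ → List α) (N : ℕ) :
    (List.range (N + 1)).flatMap f = (List.range N).flatMap f ++ f N := by
  rw [List.range_succ, List.flatMap_append]
  simp

lemma flat_zero {α : Type*} {f : ℕ → List α} : ∀ {N : ℕ},
    (∀ i < N, f i = []) → (List.range N).flatMap f = [] := by
  intro N
  induction N with
  | zero => intro _; rfl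
  | succ M ih =>
    intro h
    rw [flat_concat, ih (fun i hi => h i (by omega)), h M (by omega)]
    rfl

lemma flat_one {α : Type*} {f : ℕ → List α} {x : α} : ∀ {N a : ℕ}, a < N → f a = [x] →
    (∀ i < N, i ≠ a → f i = []) → (List.range N).flatMap f = [x] := by
  intro N
  induction N with
  | zero => intro a h; omega
  | succ M ih =>
    intro a ha hfa h0
    rw [flat_concat]
    rcases Nat.lt_or_ge a M with haM | haM
    · rw [ih haM hfa (fun i hi hia => h0 i (by omega) hia), h0 M (by omega) (by omega)]
      rfl
    · have : a = M := by omega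
      subst this
      rw [flat_zero (fun i hi => h0 i (by omega) (by omega)), hfa]
      rfl

lemma flat_two {α : Type*} {f : ℕ → List α} {x y : α} : ∀ {N a b : ℕ}, a < b → b < N →
    f a = [x] → f b = [y] → (∀ i < N, i ≠ a → i ≠ b → f i = []) →
    (List.range N).flatMap f = [x, y] := by
  intro N
  induction N with
  | zero => intro a b h1 h2; omega
  | succ M ih =>
    intro a b hab hbM hfa hfb h0
    rw [flat_concat]
    rcases Nat.lt_or_ge b M with hbM' | hbM'
    · rw [ih hab hbM' hfa hfb (fun i hi h1 h2 => h0 i (by omega) h1 h2),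
        h0 M (by omega) (by omega) (by omega)]
      rfl
    · have : b = M := by omega
      subst this
      rw [flat_one hab hfa (fun i hi hia => h0 i (by omega) hia (by omega)), hfb]
      rfl

lemma filter_order {α : Type*} (P : α → Bool) :
    ∀ (l : List α) (i j : ℕ), i < j → ∀ (u v : α), (l.filter P)[i]? = some u →
      (l.filter P)[j]? = some v →
      ∃ a b : ℕ, a < b ∧ l[a]? = some u ∧ l[b]? = some v := by
  intro l
  induction l with
  | nil => intro i j hij u v hu; simp [List.filter] at hu
  | cons x l ih =>
    intro i j hij u v hu hv
    by_cases hPx : P x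
    · rw [List.filter_cons_of_pos hPx] at hu hv
      cases i with
      | zero =>
        simp only [List.getElem?_cons_zero, Option.some_inj] at hu
        subst hu
        cases j with
        | zero => omega
        | succ j' =>
          rw [List.getElem?_cons_succ] at hv
          have hvmem : v ∈ l := List.mem_of_mem_filter (List.mem_of_getElem? hv)
          obtain ⟨b, hb⟩ := List.mem_iff_getElem?.1 hvmem
          exact ⟨0, b + 1, by omega, by simp, by simpa using hb⟩
      | succ i' =>
        cases j with
        | zero => omega
        | succ j' =>
          rw [List.getElem?_cons_succ] at hu hv
          obtain ⟨a, b, h1, h2, h3⟩ := ih i' j' (by omega) u v hu hv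
          exact ⟨a + 1, b + 1, by omega, by simpa using h2, by simpa using h3⟩
    · rw [List.filter_cons_of_neg hPx] at hu hv
      obtain ⟨a, b, h1, h2, h3⟩ := ih i j hij u v hu hv
      exact ⟨a + 1, b + 1, by omega, by simpa using h2, by simpa using h3⟩

lemma isRes_iff {Proc In Out : Type} {e : Ev Proc In Out} :
    e.isRes = true ↔ ∃ p y, e = Ev.res p y := by
  cases e <;> simp [Ev.isRes]

lemma pos_unique {α : Type*} [DecidableEq α] {l : List α} {v : α} (hc : l.count v ≤ 1)
    {a b : ℕ} (ha : l[a]? = some v) (hb : l[b]? = some v) : a = b := by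
  by_contra hab
  have hdup : l.Duplicate v := by
    obtain ⟨ha1, ha2⟩ := List.getElem?_eq_some_iff.1 ha
    obtain ⟨hb1, hb2⟩ := List.getElem?_eq_some_iff.1 hb
    rcases Nat.lt_or_ge a b with h | h
    · exact List.duplicate_iff_exists_distinct_get.2
        ⟨⟨a, ha1⟩, ⟨b, hb1⟩, by simpa using h, by simp [ha2], by simp [hb2]⟩
    · have h' : b < a := by omega
      exact List.duplicate_iff_exists_distinct_get.2
        ⟨⟨b, hb1⟩, ⟨a, ha1⟩, by simpa using h', by simp [hb2], by simp [ha2]⟩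
  have := List.duplicate_iff_two_le_count.1 hdup
  omega

lemma count_projP {E : List (Evt n)} {p : Fin n} {v : Evt n} (hv : v.proc = p) :
    E.count v = (projP E p).count v := by
  rw [projP, List.count_filter (by simp [hv])]

lemma projP_completed {E : List (Evt n)} (hwf : OneShotWF E) {p : Fin n}
    (hp : CompletedP E p) : projP E p = [Ev.inv p (), Ev.res p (sp E p)] := by
  have hmem : Ev.res p (sp E p) ∈ projP E p := by
    rw [projP, List.mem_filter]
    exact ⟨res_sp_mem hp, by simp [Ev.proc]⟩
  rcases hwf p with h | ⟨x, h⟩ | ⟨x, y, h⟩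
  · rw [h] at hmem; simp at hmem
  · rw [h] at hmem; simp at hmem
  · cases x
    rw [h] at hmem ⊢
    simp only [List.mem_cons, List.mem_singleton] at hmem
    rcases hmem with h1 | h1 | h1
    · exact absurd h1 (by simp)
    · rw [Ev.res.injEq] at h1
      rw [h1.2]
    · simp at h1

lemma res_eq_sp {E : List (Evt n)} (hwf : OneShotWF E) {p : Fin n} {s : Finset (Fin n)}
    (hres : Ev.res p s ∈ E) : s = sp E p := by
  have hp : CompletedP E p := ⟨s, hres⟩
  have hmem : Ev.res p s ∈ projP E p := by
    rw [projP, List.mem_filter]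
    exact ⟨hres, by simp [Ev.proc]⟩
  rw [projP_completed hwf hp] at hmem
  simp only [List.mem_cons, List.mem_singleton] at hmem
  rcases hmem with h1 | h1 | h1
  · exact absurd h1 (by simp)
  · rw [Ev.res.injEq] at h1; exact h1.2
  · simp at h1

lemma projP_pending {E : List (Evt n)} (hwf : OneShotWF E) {p : Fin n}
    (hinv : Ev.inv p () ∈ E) (hnc : ¬ CompletedP E p) : projP E p = [Ev.inv p ()] := by
  have hmem : Ev.inv p () ∈ projP E p := by
    rw [projP, List.mem_filter]
    exact ⟨hinv, by simp [Ev.proc]⟩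
  rcases hwf p with h | ⟨x, h⟩ | ⟨x, y, h⟩
  · rw [h] at hmem; simp at hmem
  · cases x; exact h
  · exfalso
    apply hnc
    refine ⟨y, ?_⟩
    have : Ev.res p y ∈ projP E p := by rw [h]; simp
    exact List.mem_of_mem_filter this

lemma count_res_one {E : List (Evt n)} (hwf : OneShotWF E) {p : Fin n}
    (hp : CompletedP E p) : E.count (Ev.res p (sp E p)) = 1 := by
  rw [count_projP (v := Ev.res p (sp E p)) (p := p) rfl, projP_completed hwf hp]
  simp [List.count_cons]

lemma count_inv_one {E : List (Evt n)} (hwf : OneShotWF E) {p : Fin n}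
    (hinv : Ev.inv p () ∈ E) : E.count (Ev.inv p ()) = 1 := by
  rw [count_projP (v := Ev.inv p ()) (p := p) rfl]
  by_cases hp : CompletedP E p
  · rw [projP_completed hwf hp]
    simp [List.count_cons]
  · rw [projP_pending hwf hinv hp]
    simp

noncomputable def pendNeeded (E : List (Evt n)) : Finset (Fin n) :=
  Finset.univ.filter (fun p => ¬ CompletedP E p ∧ ∃ s ∈ SS E, p ∈ s)

noncomputable def Fext (E : List (Evt n)) : List (Evt n) :=
  (pendNeeded E).toList.map (fun j => Ev.res j (sAt E (invRound E j)))

lemma mem_pendNeeded {E : List (Evt n)} {p : Fin n} :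
    p ∈ pendNeeded E ↔ ¬ CompletedP E p ∧ ∃ s ∈ SS E, p ∈ s := by
  simp [pendNeeded]

lemma pendNeeded_invRound {E : List (Evt n)} (hs : Hsnap E) {p : Fin n}
    (h : p ∈ pendNeeded E) : invRound E p < m E := by
  obtain ⟨_, s, hsSS, hps⟩ := mem_pendNeeded.1 h
  obtain ⟨k, hk, rfl⟩ := SS_surj hs hsSS
  exact invRound_lt hk hps

lemma nodup_filter_eq {α : Type*} [DecidableEq α] {l : List α} (hnd : l.Nodup) {p : α}
    (hp : p ∈ l) : l.filter (fun x => decide (x = p)) = [p] := by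
  induction l with
  | nil => simp at hp
  | cons x l ih =>
    rw [List.nodup_cons] at hnd
    rcases List.mem_cons.1 hp with rfl | hmem
    · rw [List.filter_cons_of_pos (by simp)]
      have : l.filter (fun x => decide (x = p)) = [] := by
        rw [List.filter_eq_nil_iff]
        intro a ha
        simp only [decide_eq_true_eq]
        intro heq
        exact hnd.1 (heq ▸ ha)
      rw [this]
    · rw [List.filter_cons_of_neg (by simp; rintro rfl; exact hnd.1 hmem)]
      exact ih hnd.2 hmem

lemma map_filter_proc {α β : Type*} [DecidableEq α] (g : α → β) (procf : β → α)
    (hg : ∀ j, procf (g j) = j) (p : α) :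
    ∀ l : List α, (l.map g).filter (fun e => decide (procf e = p)) =
      (l.filter (fun x => decide (x = p))).map g := by
  intro l
  induction l with
  | nil => rfl
  | cons x l ih =>
    simp only [List.map_cons]
    by_cases hxp : x = p
    · rw [List.filter_cons_of_pos (by simp [hg, hxp]),
        List.filter_cons_of_pos (by simp [hxp]), List.map_cons, ih]
    · rw [List.filter_cons_of_neg (by simp [hg, hxp]),
        List.filter_cons_of_neg (by simp [hxp]), ih]

lemma projP_Fext {E : List (Evt n)} {p : Fin n} :
    projP (Fext E) p =
      if p ∈ pendNeeded E then [Ev.res p (sAt E (invRound E p))] else [] := by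
  rw [projP, Fext,
    map_filter_proc (fun j => Ev.res j (sAt E (invRound E j))) Ev.proc (fun j => rfl) p]
  by_cases hp : p ∈ pendNeeded E
  · rw [if_pos hp, nodup_filter_eq (Finset.nodup_toList _) ((Finset.mem_toList).2 hp)]
    simp
  · rw [if_neg hp]
    have : ((pendNeeded E).toList.filter (fun x => decide (x = p))) = [] := by
      rw [List.filter_eq_nil_iff]
      intro a ha
      simp only [decide_eq_true_eq]
      rintro rfl
      exact hp (Finset.mem_toList.1 ha)
    rw [this]
    simp

lemma projP_append {X Y : List (Evt n)} {p : Fin n} :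
    projP (X ++ Y) p = projP X p ++ projP Y p := by
  rw [projP, projP, projP, List.filter_append]

lemma projP_comp_of_res {X : List (Evt n)} {p : Fin n} (h : ∃ y, Ev.res p y ∈ X) :
    projP (comp X) p = projP X p := by
  obtain ⟨y, hy⟩ := h
  rw [comp, projP, projP, List.filter_filter]
  apply List.filter_congr
  intro e _
  by_cases hep : e.proc = p
  · have hc : (e.isRes || X.any fun e' => e'.isRes && decide (e'.proc = e.proc)) = true := by
      rw [Bool.or_eq_true]
      right
      rw [List.any_eq_true]
      have hpr : (Ev.res p y : Evt n).proc = e.proc := by rw [hep]; rfl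
      exact ⟨Ev.res p y, hy, by simp [Ev.isRes, hpr]⟩
    rw [hc]
    simp
  · simp [hep]

lemma projP_comp_of_no_res {X : List (Evt n)} {p : Fin n} (h : ¬ ∃ y, Ev.res p y ∈ X) :
    projP (comp X) p = [] := by
  rw [comp, projP, List.filter_filter, List.filter_eq_nil_iff]
  intro e he
  rw [Bool.and_eq_true, decide_eq_true_eq]
  rintro ⟨hep, hc⟩
  rw [Bool.or_eq_true] at hc
  rcases hc with hc | hc
  · obtain ⟨p', y', rfl⟩ := isRes_iff.1 hc
    have : p' = p := hep
    subst this
    exact h ⟨y', he⟩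
  · rw [List.any_eq_true] at hc
    obtain ⟨e', he', hc'⟩ := hc
    rw [Bool.and_eq_true, decide_eq_true_eq] at hc'
    obtain ⟨p', y', rfl⟩ := isRes_iff.1 hc'.1
    have : p' = p := by rw [← hep]; exact hc'.2
    subst this
    exact h ⟨y', he'⟩

lemma inv_mem_E_of_mem_sAt {E : List (Evt n)} {k : ℕ} {p : Fin n} (hk : k < m E)
    (h : p ∈ sAt E k) : Ev.inv p () ∈ E := by
  obtain ⟨q, hq, heq⟩ := mem_SS.1 (sAt_mem_SS hk)
  rw [← heq] at h
  exact inv_mem_of_mem_prefInv h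

lemma Iclass_filter {E : List (Evt n)} {k : ℕ} {p : Fin n} :
    (Iclass E k).filter (fun e => e.proc = p) =
      if p ∈ Iprocs E k then ({Ev.inv p ()} : Finset (Evt n)) else ∅ := by
  ext e
  rw [Finset.mem_filter]
  by_cases hp : p ∈ Iprocs E k
  · rw [if_pos hp]
    constructor
    · rintro ⟨he, hproc⟩
      obtain ⟨j, hj, rfl⟩ := mem_Iclass_iff.1 he
      have : j = p := hproc
      subst this
      simp
    · intro he
      rw [Finset.mem_singleton] at he
      subst he
      exact ⟨mem_Iclass_iff.2 ⟨p, hp, rfl⟩, rfl⟩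
  · rw [if_neg hp]
    simp only [Finset.notMem_empty, iff_false]
    rintro ⟨he, hproc⟩
    obtain ⟨j, hj, rfl⟩ := mem_Iclass_iff.1 he
    have : j = p := hproc
    subst this
    exact hp hj

lemma Rclass_filter {E : List (Evt n)} {k : ℕ} {p : Fin n} :
    (Rclass E k).filter (fun e => e.proc = p) =
      if p ∈ responders E k then ({Ev.res p (sAt E k)} : Finset (Evt n)) else ∅ := by
  ext e
  rw [Finset.mem_filter]
  by_cases hp : p ∈ responders E k
  · rw [if_pos hp]
    constructor
    · rintro ⟨he, hproc⟩
      obtain ⟨j, hj, rfl⟩ := mem_Rclass_iff.1 he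
      have : j = p := hproc
      subst this
      simp
    · intro he
      rw [Finset.mem_singleton] at he
      subst he
      exact ⟨mem_Rclass_iff.2 ⟨p, hp, rfl⟩, rfl⟩
  · rw [if_neg hp]
    simp only [Finset.notMem_empty, iff_false]
    rintro ⟨he, hproc⟩
    obtain ⟨j, hj, rfl⟩ := mem_Rclass_iff.1 he
    have : j = p := hproc
    subst this
    exact hp hj

lemma projPIS_hseq {E : List (Evt n)} {p : Fin n} :
    projPIS (hseq E) p = (List.range (2 * m E)).flatMap
      (fun i => (((if i % 2 = 0 then Iclass E (i/2) else Rclass E (i/2)).filter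
        (fun e => e.proc = p)).toList)) := by
  rw [projPIS, hseq, List.flatMap_map]

lemma mem_responders_completed {E : List (Evt n)} (hs : Hsnap E) {p : Fin n} {k : ℕ}
    (hk : k < m E) (hp : CompletedP E p) :
    p ∈ responders E k ↔ k = resRound E p := by
  rw [mem_responders_iff hs hk]
  constructor
  · rintro ⟨h1, ⟨_, h2⟩ | ⟨hn, _⟩⟩
    · exact h2.symm
    · exact absurd hp hn
  · rintro rfl
    refine ⟨?_, Or.inl ⟨hp, rfl⟩⟩
    rw [(resRound_spec hs hp).2]
    exact self_mem_sp hs hp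

lemma mem_responders_pending {E : List (Evt n)} (hs : Hsnap E) {p : Fin n} {k : ℕ}
    (hk : k < m E) (hp : ¬ CompletedP E p) :
    p ∈ responders E k ↔ k = invRound E p ∧ p ∈ sAt E k := by
  rw [mem_responders_iff hs hk]
  constructor
  · rintro ⟨h1, ⟨hc, _⟩ | ⟨_, h2⟩⟩
    · exact absurd hc hp
    · exact ⟨h2.symm, h1⟩
  · rintro ⟨rfl, h1⟩
    exact ⟨h1, Or.inr ⟨hp, rfl⟩⟩

lemma proj_eq {E : List (Evt n)} (hwf : OneShotWF E) (hs : Hsnap E) (p : Fin n) :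
    projP (comp (E ++ Fext E)) p = projPIS (hseq E) p := by
  by_cases hp : CompletedP E p
  · -- completed process
    have hnp : p ∉ pendNeeded E := by
      rw [mem_pendNeeded]
      rintro ⟨hn, _⟩
      exact hn hp
    have hres : ∃ y, Ev.res p y ∈ E ++ Fext E :=
      ⟨sp E p, List.mem_append_left _ (res_sp_mem hp)⟩
    rw [projP_comp_of_res hres, projP_append, projP_completed hwf hp, projP_Fext,
      if_neg hnp, List.append_nil, projPIS_hseq]
    have hrr := resRound_spec hs hp
    have hir := invRound_le_resRound hs hp
    have hirm : invRound E p < m E := lt_of_le_of_lt hir hrr.1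
    refine (flat_two (a := 2 * invRound E p) (b := 2 * resRound E p + 1)
      (by omega) (by omega) ?_ ?_ ?_).symm
    · rw [if_pos (by omega), Nat.mul_div_cancel_left _ (by norm_num), Iclass_filter,
        if_pos ((mem_Iprocs_iff hirm).2 ⟨mem_sAt_invRound hirm, rfl⟩),
        Finset.toList_singleton]
    · rw [if_neg (by omega)]
      have h2 : (2 * resRound E p + 1) / 2 = resRound E p := by omega
      rw [h2, Rclass_filter, if_pos ((mem_responders_completed hs hrr.1 hp).2 rfl),
        Finset.toList_singleton, hrr.2]
    · intro i hi hia hib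
      by_cases hpar : i % 2 = 0
      · rw [if_pos hpar, Iclass_filter, if_neg, Finset.toList_empty]
        intro hmem
        have := ((mem_Iprocs_iff (show i / 2 < m E by omega)).1 hmem).2
        omega
      · rw [if_neg hpar, Rclass_filter, if_neg, Finset.toList_empty]
        intro hmem
        have := (mem_responders_completed hs (show i / 2 < m E by omega) hp).1 hmem
        omega
  · by_cases hneed : p ∈ pendNeeded E
    · -- pending but needed
      have hinv : Ev.inv p () ∈ E := by
        obtain ⟨_, s, hsSS, hps⟩ := mem_pendNeeded.1 hneed
        obtain ⟨k, hk, rfl⟩ := SS_surj hs hsSS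
        exact inv_mem_E_of_mem_sAt hk hps
      have hirm : invRound E p < m E := pendNeeded_invRound hs hneed
      have hres : ∃ y, Ev.res p y ∈ E ++ Fext E := by
        refine ⟨sAt E (invRound E p), List.mem_append_right _ ?_⟩
        rw [Fext, List.mem_map]
        exact ⟨p, Finset.mem_toList.2 hneed, rfl⟩
      rw [projP_comp_of_res hres, projP_append, projP_pending hwf hinv hp, projP_Fext,
        if_pos hneed, projPIS_hseq]
      refine (flat_two (a := 2 * invRound E p) (b := 2 * invRound E p + 1)
        (by omega) (by omega) ?_ ?_ ?_).symm
      · rw [if_pos (by omega), Nat.mul_div_cancel_left _ (by norm_num), Iclass_filter,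
          if_pos ((mem_Iprocs_iff hirm).2 ⟨mem_sAt_invRound hirm, rfl⟩),
          Finset.toList_singleton]
      · rw [if_neg (by omega)]
        have h2 : (2 * invRound E p + 1) / 2 = invRound E p := by omega
        rw [h2, Rclass_filter,
          if_pos ((mem_responders_pending hs hirm hp).2 ⟨rfl, mem_sAt_invRound hirm⟩),
          Finset.toList_singleton]
      · intro i hi hia hib
        by_cases hpar : i % 2 = 0
        · rw [if_pos hpar, Iclass_filter, if_neg, Finset.toList_empty]
          intro hmem
          have := ((mem_Iprocs_iff (show i / 2 < m E by omega)).1 hmem).2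
          omega
        · rw [if_neg hpar, Rclass_filter, if_neg, Finset.toList_empty]
          intro hmem
          have := ((mem_responders_pending hs (show i / 2 < m E by omega) hp).1 hmem).1
          omega
    · -- neither completed nor needed
      have hnores : ¬ ∃ y, Ev.res p y ∈ E ++ Fext E := by
        rintro ⟨y, hy⟩
        rcases List.mem_append.1 hy with hy | hy
        · exact hp ⟨y, hy⟩
        · rw [Fext, List.mem_map] at hy
          obtain ⟨j, hj, hjq⟩ := hy
          have : j = p := by
            rw [Ev.res.injEq] at hjq
            exact hjq.1
          subst this
          exact hneed (Finset.mem_toList.1 hj)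
      rw [projP_comp_of_no_res hnores, projPIS_hseq]
      refine (flat_zero ?_).symm
      intro i hi
      have him : i / 2 < m E := by omega
      have hnm : ∀ k, k < m E → p ∉ sAt E k := by
        intro k hk hmem
        exact hneed (mem_pendNeeded.2 ⟨hp, sAt E k, sAt_mem_SS hk, hmem⟩)
      by_cases hpar : i % 2 = 0
      · rw [if_pos hpar, Iclass_filter, if_neg, Finset.toList_empty]
        intro hmem
        exact hnm _ him ((mem_Iprocs_iff him).1 hmem).1
      · rw [if_neg hpar, Rclass_filter, if_neg, Finset.toList_empty]
        intro hmem
        exact hnm _ him (((mem_responders_pending hs him hp).1 hmem).2)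

lemma wf_Ebar {E : List (Evt n)} (hwf : OneShotWF E) (hs : Hsnap E) :
    OneShotWF (E ++ Fext E) := by
  intro p
  rw [projP_append, projP_Fext]
  by_cases hp : CompletedP E p
  · have hnp : p ∉ pendNeeded E := by
      rw [mem_pendNeeded]
      rintro ⟨hn, _⟩
      exact hn hp
    rw [if_neg hnp, List.append_nil, projP_completed hwf hp]
    exact Or.inr (Or.inr ⟨(), sp E p, rfl⟩)
  · by_cases hneed : p ∈ pendNeeded E
    · have hinv : Ev.inv p () ∈ E := by
        obtain ⟨_, s, hsSS, hps⟩ := mem_pendNeeded.1 hneed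
        obtain ⟨k, hk, rfl⟩ := SS_surj hs hsSS
        exact inv_mem_E_of_mem_sAt hk hps
      rw [if_pos hneed, projP_pending hwf hinv hp]
      exact Or.inr (Or.inr ⟨(), sAt E (invRound E p), rfl⟩)
    · rw [if_neg hneed, List.append_nil]
      exact hwf p

lemma extension_Ebar {E : List (Evt n)} (hwf : OneShotWF E) (hs : Hsnap E) :
    Extension E (E ++ Fext E) := by
  refine ⟨wf_Ebar hwf hs, Fext E, rfl, ?_⟩
  intro e he
  rw [Fext, List.mem_map] at he
  obtain ⟨j, _, rfl⟩ := he
  rfl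

lemma respects_hseq {E : List (Evt n)} (hwf : OneShotWF E) (hs : Hsnap E) :
    Respects (comp (E ++ Fext E)) (hseq E) := by
  intro p q hprec
  obtain ⟨i, j, y, x, hij, hi, hj⟩ := hprec
  -- transfer the precedence to positions in E
  rw [comp] at hi hj
  obtain ⟨a, b, hab, ha, hb⟩ := filter_order _ _ i j hij _ _ hi hj
  cases x
  have hbE : b < E.length := by
    by_contra hc
    push_neg at hc
    rw [List.getElem?_append, if_neg (by omega)] at hb
    have hmem : (Ev.inv q () : Evt n) ∈ Fext E := List.mem_of_getElem? hb
    rw [Fext, List.mem_map] at hmem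
    obtain ⟨j', _, hj'⟩ := hmem
    exact nomatch hj'
  have haE : a < E.length := by omega
  rw [List.getElem?_append, if_pos haE] at ha
  rw [List.getElem?_append, if_pos hbE] at hb
  have hp : CompletedP E p := ⟨y, List.mem_of_getElem? ha⟩
  have hysp : y = sp E p := res_eq_sp hwf (List.mem_of_getElem? ha)
  subst hysp
  -- the response position is after the linearization time of p
  obtain ⟨b', hb'1, hb'2⟩ := (timeProp_holds hs hp).2.1
  have hab' : a = b' := pos_unique (by rw [count_res_one hwf hp]) ha hb'2
  have htpa : time E p < a := by omega
  -- q is not in the snapshot of p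
  have hqsp : q ∉ sp E p := by
    intro hq
    obtain ⟨c, hc1, hc2⟩ := (timeProp_holds hs hp).2.2 q |>.1 hq
    have : c = b := pos_unique (by rw [count_inv_one hwf (List.mem_of_getElem? hb)]) hc2 hb
    omega
  have hrr := resRound_spec hs hp
  -- main comparison
  intro k l C D hC hD ⟨e, heC, hep⟩ ⟨e', he'D, he'q⟩
  obtain ⟨hk2m, rfl⟩ := hseq_getElem?_eq_some hC
  obtain ⟨hl2m, rfl⟩ := hseq_getElem?_eq_some hD
  -- k is at most 2 * resRound p + 1
  have hkle : k ≤ 2 * resRound E p + 1 := by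
    by_cases hpar : k % 2 = 0
    · rw [if_pos hpar] at heC
      obtain ⟨j0, hj0, rfl⟩ := mem_Iclass_iff.1 heC
      have : j0 = p := hep
      subst this
      have h1 := ((mem_Iprocs_iff (show k / 2 < m E by omega)).1 hj0).2
      have h2 := invRound_le_resRound hs hp
      omega
    · rw [if_neg hpar] at heC
      obtain ⟨j0, hj0, rfl⟩ := mem_Rclass_iff.1 heC
      have : j0 = p := hep
      subst this
      have := (mem_responders_completed hs (show k / 2 < m E by omega) hp).1 hj0
      omega
  -- q appears, from round invRound q on, and invRound q > resRound p
  have hql : 2 * invRound E q ≤ l ∧ invRound E q < m E := by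
    by_cases hpar : l % 2 = 0
    · rw [if_pos hpar] at he'D
      obtain ⟨j0, hj0, rfl⟩ := mem_Iclass_iff.1 he'D
      have : j0 = q := he'q
      subst this
      have h1 := (mem_Iprocs_iff (show l / 2 < m E by omega)).1 hj0
      constructor
      · omega
      · rw [h1.2]; omega
    · rw [if_neg hpar] at he'D
      obtain ⟨j0, hj0, rfl⟩ := mem_Rclass_iff.1 he'D
      have hj0q : j0 = q := he'q
      rw [hj0q] at hj0
      have h1 : q ∈ sAt E (l / 2) := (Finset.mem_filter.1 hj0).1
      have h2 := invRound_le (show l / 2 < m E by omega) h1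
      constructor
      · omega
      · exact lt_of_le_of_lt h2 (show l / 2 < m E by omega)
  have hmain : resRound E p < invRound E q := by
    by_contra hcon
    push_neg at hcon
    have : q ∈ sAt E (resRound E p) :=
      sAt_mono hcon hrr.1 (mem_sAt_invRound hql.2)
    rw [hrr.2] at this
    exact hqsp this
  omega

end WS

/-- **The write-snapshot algorithm is interval-linearizable.** Any well-formed
one-shot execution `E` in which each completed operation of `p_i`, returning
`set_i`, admits a time `t` strictly between its invocation and its response such
that `set_i` is exactly the set of indices whose invocations occur before `t`,
is interval-linearizable with respect to the write-snapshot object. -/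
theorem write_snapshot_interval_linearizable (n : ℕ)
    (E : List (Ev (Fin n) Unit (Finset (Fin n))))
    (hwf : OneShotWF E)
    (hsnap : ∀ (i : Fin n) (s : Finset (Fin n)), Ev.res i s ∈ E →
      ∃ t : ℕ,
        (∃ a : ℕ, a < t ∧ E[a]? = some (Ev.inv i ())) ∧
        (∃ b : ℕ, t < b ∧ E[b]? = some (Ev.res i s)) ∧
        (∀ j : Fin n, j ∈ s ↔ ∃ c : ℕ, c < t ∧ E[c]? = some (Ev.inv j ()))) :
    IntervalLin (wsObject n) E := by
  have hs : WS.Hsnap E := hsnap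
  exact ⟨E ++ WS.Fext E, WS.hseq E, WS.extension_Ebar hwf hs, WS.hseq_mem_ISS hs,
    fun p => WS.proj_eq hwf hs p, WS.respects_hseq hwf hs⟩
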